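/- If f maps regular elements of A to regular elements of B and A ⋈^f J is a Prüfer ring, then A is a Prüfer ring. -/

import Mathlib

variable {A B : Type*} [CommRing A] [CommRing B]

/-- The amalgamation `A ⋈^f J` of `A` and `B` along the ideal `J` with respect to `f`,
as a subring of `A × B`. -/
def amalg (f : A →+* B) (J : Ideal B) : Subring (A × B) where
  carrier := {p | ∃ a, ∃ j ∈ J, p = (a, f a + j)}
  zero_mem' := ⟨0, 0, J.zero_mem, by ext <;> simp⟩
  one_mem' := ⟨1, 0, J.zero_mem, by ext <;> simp⟩
  add_mem' := by
    rintro _ _ ⟨a, j, hj, rfl⟩ ⟨a', j', hj', rfl⟩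
    exact ⟨a + a', j + j', J.add_mem hj hj', by simp [Prod.ext_iff]; ring⟩
  neg_mem' := by
    rintro _ ⟨a, j, hj, rfl⟩
    exact ⟨-a, -j, J.neg_mem hj, by simp [Prod.ext_iff]; ring⟩
  mul_mem' := by
    rintro _ _ ⟨a, j, hj, rfl⟩ ⟨a', j', hj', rfl⟩
    exact ⟨a * a', f a * j' + j * f a' + j * j',
      J.add_mem (J.add_mem (J.mul_mem_left _ hj') (J.mul_mem_right _ hj)) (J.mul_mem_right _ hj),
      by simp [Prod.ext_iff]; ring⟩

/-- The set of zero-divisors of a ring. -/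
def zdSet (R : Type*) [CommRing R] : Set R := {a | ∃ b, b ≠ 0 ∧ a * b = 0}

/-- The content ideal of a polynomial: the ideal generated by its coefficients. -/
def contentIdeal {R : Type*} [CommRing R] (p : Polynomial R) : Ideal R :=
  Ideal.span (Set.range p.coeff)

/-- A polynomial is Gaussian if `c(ph) = c(p) c(h)` for every polynomial `h`. -/
def IsGaussianPoly {R : Type*} [CommRing R] (p : Polynomial R) : Prop :=
  ∀ h : Polynomial R, contentIdeal (p * h) = contentIdeal p * contentIdeal h

/-- A Gaussian ring. -/
def IsGaussianRing (R : Type*) [CommRing R] : Prop :=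
  ∀ p q : Polynomial R, contentIdeal (p * q) = contentIdeal p * contentIdeal q

/-- A Prüfer ring: every finitely generated regular ideal is invertible
(in the total ring of quotients). -/
def IsPruferRing (R : Type*) [CommRing R] : Prop :=
  ∀ I : Ideal R, I.FG → (∃ r ∈ I, r ∈ nonZeroDivisors R) →
    ∃ T : FractionalIdeal (nonZeroDivisors R) (FractionRing R),
      (I : FractionalIdeal (nonZeroDivisors R) (FractionRing R)) * T = 1

theorem aux_inv_of_span {R : Type*} [CommRing R] (I K : Ideal R) (r : R)
    (hr : r ∈ nonZeroDivisors R) (hIK : I * K = Ideal.span {r}) :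
    ∃ T : FractionalIdeal (nonZeroDivisors R) (FractionRing R),
      (I : FractionalIdeal (nonZeroDivisors R) (FractionRing R)) * T = 1 := by
  obtain ⟨u, hu⟩ : IsUnit (algebraMap R (FractionRing R) r) :=
    IsLocalization.map_units _ (⟨r, hr⟩ : nonZeroDivisors R)
  refine ⟨FractionalIdeal.spanSingleton _ ((u⁻¹ : (FractionRing R)ˣ) : FractionRing R) *
    (K : FractionalIdeal (nonZeroDivisors R) (FractionRing R)), ?_⟩
  rw [← mul_assoc, mul_comm (I : FractionalIdeal (nonZeroDivisors R) (FractionRing R)),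
    mul_assoc, ← FractionalIdeal.coeIdeal_mul, hIK, FractionalIdeal.coeIdeal_span_singleton,
    ← hu, FractionalIdeal.spanSingleton_mul_spanSingleton, Units.inv_mul,
    FractionalIdeal.spanSingleton_one]

theorem aux_span_of_inv {R : Type*} [CommRing R] (I : Ideal R) (r : R) (hrI : r ∈ I)
    (T : FractionalIdeal (nonZeroDivisors R) (FractionRing R))
    (hT : (I : FractionalIdeal (nonZeroDivisors R) (FractionRing R)) * T = 1) :
    ∃ K : Ideal R, I * K = Ideal.span {r} := by
  have h1 : FractionalIdeal.spanSingleton (nonZeroDivisors R)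
      (algebraMap R (FractionRing R) r) * T ≤ 1 := by
    rw [← hT]
    exact mul_le_mul_left (FractionalIdeal.spanSingleton_le_iff_mem.mpr
      (FractionalIdeal.mem_coeIdeal_of_mem _ hrI)) T
  obtain ⟨K, hK⟩ := FractionalIdeal.le_one_iff_exists_coeIdeal.mp h1
  refine ⟨K, FractionalIdeal.coeIdeal_injective' le_rfl (P := FractionRing R) ?_⟩
  show ((I * K : Ideal R) : FractionalIdeal (nonZeroDivisors R) (FractionRing R)) =
    ((Ideal.span {r} : Ideal R) : FractionalIdeal (nonZeroDivisors R) (FractionRing R))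
  rw [FractionalIdeal.coeIdeal_mul, hK, FractionalIdeal.coeIdeal_span_singleton, ← mul_assoc,
    mul_comm (I : FractionalIdeal (nonZeroDivisors R) (FractionRing R)), mul_assoc, hT, mul_one]

/-- The inclusion `A → A ⋈^f J`. -/
def amalgIota (f : A →+* B) (J : Ideal B) : A →+* ↥(amalg f J) where
  toFun a := ⟨(a, f a), ⟨a, 0, J.zero_mem, by simp⟩⟩
  map_one' := Subtype.ext (by simp)
  map_mul' a b := Subtype.ext (by simp)
  map_zero' := Subtype.ext (by simp)
  map_add' a b := Subtype.ext (by simp)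

/-- The projection `A ⋈^f J → A`. -/
def amalgPi (f : A →+* B) (J : Ideal B) : ↥(amalg f J) →+* A :=
  (RingHom.fst A B).comp (Subring.subtype _)

theorem amalgIota_regular (f : A →+* B) (J : Ideal B)
    (hreg : ∀ a ∈ nonZeroDivisors A, f a ∈ nonZeroDivisors B)
    {r : A} (hr : r ∈ nonZeroDivisors A) :
    amalgIota f J r ∈ nonZeroDivisors ↥(amalg f J) := by
  rw [mem_nonZeroDivisors_iff_right]
  intro x hx
  obtain ⟨b, j, hj, hb⟩ := x.2
  have hval : (x : A × B) * (amalgIota f J r : A × B) = 0 := by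
    rw [← Subring.coe_mul, hx, Subring.coe_zero]
  rw [hb] at hval
  have h1 : b * r = 0 := congrArg Prod.fst hval
  have h2 : (f b + j) * f r = 0 := congrArg Prod.snd hval
  have hb0 : b = 0 := mem_nonZeroDivisors_iff_right.mp hr b h1
  subst hb0
  rw [map_zero, zero_add] at h2
  have hj0 : j = 0 := mem_nonZeroDivisors_iff_right.mp (hreg r hr) j h2
  apply Subtype.ext
  rw [hb, hj0]
  simp

/-- If `f` maps regular elements to regular elements and `A ⋈^f J` is Prüfer, then so is `A`. -/
theorem prufer_of_amalg_prufer (f : A →+* B) (J : Ideal B) (hJ : J ≠ ⊤)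
    (hreg : ∀ a ∈ nonZeroDivisors A, f a ∈ nonZeroDivisors B)
    (h : IsPruferRing ↥(amalg f J)) : IsPruferRing A := by
  intro I hFG ⟨r, hrI, hr⟩
  set ι := amalgIota f J
  set π := amalgPi f J
  have hπι : π.comp ι = RingHom.id A := RingHom.ext fun a => rfl
  obtain ⟨T, hT⟩ := h (I.map ι) (hFG.map ι)
    ⟨ι r, Ideal.mem_map_of_mem ι hrI, amalgIota_regular f J hreg hr⟩
  obtain ⟨K', hK'⟩ := aux_span_of_inv (I.map ι) (ι r) (Ideal.mem_map_of_mem ι hrI) T hT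
  have hdown : I * K'.map π = Ideal.span {r} := by
    have := congrArg (Ideal.map π) hK'
    rwa [Ideal.map_mul, Ideal.map_map, hπι, Ideal.map_id, Ideal.map_span,
      Set.image_singleton] at this
  exact aux_inv_of_span I (K'.map π) r hr hdown
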